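/- Let G be an uncertain signed graph where each edge e exists independently with probability p_e, and let e = (u,v) be a bridge of G separating G into components G1 (containing u) and G2 (containing v) with disjoint vertex sets. Then the balance rate of G equals the product of the balance rates of G1 and G2, i.e., R_bal(G) = R_bal(G1) · R_bal(G2). -/

import Mathlib

open SimpleGraph Finset

variable {V : Type*}

/-- A signed graph `(G, σ)` (with `σ e = true` meaning the edge `e` is positive)
has no negative cycle: no cycle has an odd number of negative edges. -/
def NoNegCycle (G : SimpleGraph V) (σ : Sym2 V → Bool) : Prop :=
  ∀ (u : V) (w : G.Walk u u), w.IsCycle →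
    ¬ Odd ((w.edges.filter fun e => σ e = false).length)

/- The edge set of `G` as a `Finset`. -/
open scoped Classical in
noncomputable def edgeFS [Fintype V] (G : SimpleGraph V) : Finset (Sym2 V) :=
  Finset.univ.filter (· ∈ G.edgeSet)

/- The balance rate of an uncertain signed graph: the probability, when each edge `e`
exists independently with probability `p e`, that the realized signed graph is balanced
(contains no negative cycle). -/
open scoped Classical in
noncomputable def Rbal [Fintype V] (G : SimpleGraph V) (σ : Sym2 V → Bool)
    (p : Sym2 V → ℝ) : ℝ :=
  ∑ S ∈ (edgeFS G).powerset,
    ((∏ e ∈ S, p e) * ∏ e ∈ edgeFS G \ S, (1 - p e)) *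
      (if NoNegCycle (SimpleGraph.fromEdgeSet (↑S : Set (Sym2 V))) σ then 1 else 0)

/-- The subgraph of `G` induced on a vertex set `A` (kept on the same vertex type). -/
def restrictTo (G : SimpleGraph V) (A : Set V) : SimpleGraph V where
  Adj x y := G.Adj x y ∧ x ∈ A ∧ y ∈ A
  symm := ⟨fun _ _ h => ⟨h.1.symm, h.2.2, h.2.1⟩⟩
  loopless := ⟨fun x h => G.loopless.irrefl x h.1⟩

/-! ### Auxiliary definitions and lemmas -/

open scoped Classical

/- The indicator of balance of a realization. -/
noncomputable def Ind (σ : Sym2 V → Bool) (S : Finset (Sym2 V)) : ℝ :=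
  if NoNegCycle (SimpleGraph.fromEdgeSet (↑S : Set (Sym2 V))) σ then 1 else 0

/- The probability weight of a realization `S` of the edge set `E`. -/
noncomputable def Wt (p : Sym2 V → ℝ) (E S : Finset (Sym2 V)) : ℝ :=
  (∏ e ∈ S, p e) * ∏ e ∈ E \ S, (1 - p e)

lemma Rbal_eq [Fintype V] (G : SimpleGraph V) (σ : Sym2 V → Bool) (p : Sym2 V → ℝ) :
    Rbal G σ p = ∑ S ∈ (edgeFS G).powerset, Wt p (edgeFS G) S * Ind σ S := rfl

lemma mem_edgeFS [Fintype V] {G : SimpleGraph V} {e : Sym2 V} :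
    e ∈ edgeFS G ↔ e ∈ G.edgeSet := by
  classical
  simp [edgeFS]

lemma edgeFS_restrict_mem [Fintype V] {G : SimpleGraph V} {A : Set V} {e : Sym2 V}
    (he : e ∈ edgeFS (restrictTo G A)) : e ∈ G.edgeSet ∧ ∀ x ∈ e, x ∈ A := by
  rw [mem_edgeFS] at he
  induction e using Sym2.ind with
  | _ x y =>
    rw [SimpleGraph.mem_edgeSet] at he
    obtain ⟨hadj, hx, hy⟩ := he
    refine ⟨by rw [SimpleGraph.mem_edgeSet]; exact hadj, ?_⟩
    intro z hz
    rcases Sym2.mem_iff.mp hz with rfl | rfl <;> assumption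

/-- Along a walk whose edges all lie in `S₁` (edges inside `P`) or `S₂` (edges inside `Pᶜ`),
starting inside `P`, all edges lie in `S₁`. -/
lemma walk_side {S₁ S₂ : Finset (Sym2 V)} {P : Set V}
    (h₁ : ∀ e ∈ S₁, ∀ x ∈ e, x ∈ P) (h₂ : ∀ e ∈ S₂, ∀ x ∈ e, x ∉ P)
    {H : SimpleGraph V} {x y : V} (w : H.Walk x y)
    (hw : ∀ e ∈ w.edges, e ∈ S₁ ∨ e ∈ S₂) (hx : x ∈ P) :
    ∀ e ∈ w.edges, e ∈ S₁ := by
  induction w with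
  | nil => intro e he; simp at he
  | @cons a b c h w ih =>
    intro e he
    have hab : s(a, b) ∈ S₁ ∨ s(a, b) ∈ S₂ := hw _ (by simp)
    have hab1 : s(a, b) ∈ S₁ := by
      rcases hab with h' | h'
      · exact h'
      · exact absurd hx (h₂ _ h' a (Sym2.mem_mk_left a b))
    have hbP : b ∈ P := h₁ _ hab1 b (Sym2.mem_mk_right a b)
    rcases (by simpa using he : e = s(a, b) ∨ e ∈ w.edges) with rfl | he'
    · exact hab1
    · exact ih (fun e' he' => hw e' (by simp [he'])) hbP e he'

lemma nonegcycle_mono {σ : Sym2 V → Bool} {T T' : Finset (Sym2 V)} (h : T ⊆ T')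
    (hT' : NoNegCycle (fromEdgeSet (↑T' : Set (Sym2 V))) σ) :
    NoNegCycle (fromEdgeSet (↑T : Set (Sym2 V))) σ := by
  intro x w hw
  have hsub : ∀ e ∈ w.edges, e ∈ (fromEdgeSet (↑T' : Set (Sym2 V))).edgeSet := by
    intro e he
    have h' := w.edges_subset_edgeSet he
    rw [edgeSet_fromEdgeSet] at h' ⊢
    exact ⟨h h'.1, h'.2⟩
  have := hT' x (w.transfer _ hsub) (hw.transfer hsub)
  rwa [SimpleGraph.Walk.edges_transfer] at this

/-- The key graph-theoretic fact: balance of a realization splits across a bridge. -/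
lemma nonegcycle_split [Fintype V] {G : SimpleGraph V} {σ : Sym2 V → Bool} {A : Set V}
    {u v : V} (huv : G.Adj u v) (hbridge : G.IsBridge s(u, v)) (hu : u ∈ A) (hv : v ∉ A)
    {S₁ S₂ c : Finset (Sym2 V)}
    (h1 : S₁ ⊆ edgeFS (restrictTo G A)) (h2 : S₂ ⊆ edgeFS (restrictTo G Aᶜ))
    (hc : c ⊆ {s(u, v)}) :
    NoNegCycle (fromEdgeSet (↑(S₁ ∪ (S₂ ∪ c)) : Set (Sym2 V))) σ ↔
      NoNegCycle (fromEdgeSet (↑S₁ : Set (Sym2 V))) σ ∧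
        NoNegCycle (fromEdgeSet (↑S₂ : Set (Sym2 V))) σ := by
  have hadjuv := huv
  have hcyc := (SimpleGraph.isBridge_iff_forall_cycle_notMem (G.mem_edgeSet.mpr huv)).mp hbridge
  have hA1 : ∀ e ∈ S₁, ∀ x ∈ e, x ∈ A := fun e he => (edgeFS_restrict_mem (h1 he)).2
  have hA2 : ∀ e ∈ S₂, ∀ x ∈ e, x ∈ Aᶜ := fun e he => (edgeFS_restrict_mem (h2 he)).2
  constructor
  · intro hU
    exact ⟨nonegcycle_mono (Finset.subset_union_left) hU,
      nonegcycle_mono ((Finset.subset_union_left).trans Finset.subset_union_right) hU⟩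
  · rintro ⟨hGA, hGB⟩ x w hw
    -- the walk's edges all lie in the union, and none is diagonal
    have hedge : ∀ e ∈ w.edges, e ∈ (S₁ ∪ (S₂ ∪ c)) ∧ ¬ e.IsDiag := by
      intro e he
      have h' := w.edges_subset_edgeSet he
      rw [edgeSet_fromEdgeSet] at h'
      exact ⟨h'.1, h'.2⟩
    -- the walk transfers to G, so the bridge edge is not among its edges
    have hsubG : ∀ e ∈ w.edges, e ∈ G.edgeSet := by
      intro e he
      rcases Finset.mem_union.mp (hedge e he).1 with h' | h'
      · exact (edgeFS_restrict_mem (h1 h')).1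
      · rcases Finset.mem_union.mp h' with h'' | h''
        · exact (edgeFS_restrict_mem (h2 h'')).1
        · have := hc h''
          rw [Finset.mem_singleton] at this
          subst this
          rw [SimpleGraph.mem_edgeSet]
          exact hadjuv
    have hb : s(u, v) ∉ w.edges := by
      have := hcyc (w.transfer G hsubG) (hw.transfer hsubG)
      rwa [SimpleGraph.Walk.edges_transfer] at this
    have hmem : ∀ e ∈ w.edges, e ∈ S₁ ∨ e ∈ S₂ := by
      intro e he
      rcases Finset.mem_union.mp (hedge e he).1 with h' | h'
      · exact Or.inl h'
      · rcases Finset.mem_union.mp h' with h'' | h''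
        · exact Or.inr h''
        · have := hc h''
          rw [Finset.mem_singleton] at this
          subst this
          exact absurd he hb
    by_cases hx : x ∈ A
    · have hall : ∀ e ∈ w.edges, e ∈ S₁ :=
        walk_side hA1 (fun e he y hy => by simpa using hA2 e he y hy) w hmem hx
      have hsub1 : ∀ e ∈ w.edges, e ∈ (fromEdgeSet (↑S₁ : Set (Sym2 V))).edgeSet := by
        intro e he
        rw [edgeSet_fromEdgeSet]
        exact ⟨hall e he, (hedge e he).2⟩
      have := hGA x (w.transfer _ hsub1) (hw.transfer hsub1)
      rwa [SimpleGraph.Walk.edges_transfer] at this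
    · have hall : ∀ e ∈ w.edges, e ∈ S₂ :=
        walk_side (P := Aᶜ) hA2 (fun e he y hy hyc => hyc (hA1 e he y hy))
          w (fun e he => (hmem e he).symm) hx
      have hsub2 : ∀ e ∈ w.edges, e ∈ (fromEdgeSet (↑S₂ : Set (Sym2 V))).edgeSet := by
        intro e he
        rw [edgeSet_fromEdgeSet]
        exact ⟨hall e he, (hedge e he).2⟩
      have := hGB x (w.transfer _ hsub2) (hw.transfer hsub2)
      rwa [SimpleGraph.Walk.edges_transfer] at this

/-- Decomposition of the edge set of `G` along the separation. -/
lemma edgeFS_decomp [Fintype V] {G : SimpleGraph V} {A : Set V} {u v : V}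
    (huv : G.Adj u v)
    (hsep : ∀ x y, G.Adj x y →
      s(x, y) = s(u, v) ∨ (x ∈ A ∧ y ∈ A) ∨ (x ∉ A ∧ y ∉ A)) :
    edgeFS G = edgeFS (restrictTo G A) ∪ (edgeFS (restrictTo G Aᶜ) ∪ {s(u, v)}) := by
  ext e
  induction e using Sym2.ind with
  | _ x y =>
    simp only [mem_edgeFS, Finset.mem_union, Finset.mem_singleton,
      SimpleGraph.mem_edgeSet]
    constructor
    · intro h
      rcases hsep x y h with h' | ⟨hx, hy⟩ | ⟨hx, hy⟩
      · exact Or.inr (Or.inr h')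
      · exact Or.inl ⟨h, hx, hy⟩
      · exact Or.inr (Or.inl ⟨h, hx, hy⟩)
    · rintro (⟨h, -⟩ | ⟨h, -⟩ | h)
      · exact h
      · exact h
      · rw [Sym2.eq_iff] at h
        rcases h with ⟨rfl, rfl⟩ | ⟨rfl, rfl⟩
        · exact huv
        · exact huv.symm

/-- Factorization of a sum over the powerset of a disjoint union. -/
lemma sum_powerset_union_disjoint {α : Type*} [DecidableEq α] (s t : Finset α)
    (hst : Disjoint s t) (f g : Finset α → ℝ) :
    ∑ S ∈ (s ∪ t).powerset, f (S ∩ s) * g (S ∩ t) =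
      (∑ S ∈ s.powerset, f S) * (∑ S ∈ t.powerset, g S) := by
  rw [Finset.sum_mul_sum, ← Finset.sum_product']
  refine Finset.sum_nbij' (i := fun S => (S ∩ s, S ∩ t)) (j := fun P => P.1 ∪ P.2)
    ?_ ?_ ?_ ?_ ?_
  · intro S hS
    simp only [Finset.mem_product, Finset.mem_powerset]
    exact ⟨Finset.inter_subset_right, Finset.inter_subset_right⟩
  · intro P hP
    simp only [Finset.mem_product, Finset.mem_powerset] at hP ⊢
    exact Finset.union_subset_union hP.1 hP.2
  · intro S hS
    rw [Finset.mem_powerset] at hS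
    show S ∩ s ∪ S ∩ t = S
    rw [← Finset.inter_union_distrib_left]
    exact Finset.inter_eq_left.mpr hS
  · intro P hP
    simp only [Finset.mem_product, Finset.mem_powerset] at hP
    obtain ⟨h1, h2⟩ := hP
    show ((P.1 ∪ P.2) ∩ s, (P.1 ∪ P.2) ∩ t) = P
    have e2 : P.2 ∩ s = ∅ := Finset.disjoint_iff_inter_eq_empty.mp (hst.symm.mono_left h2)
    have e1 : P.1 ∩ t = ∅ := Finset.disjoint_iff_inter_eq_empty.mp (hst.mono_left h1)
    have q1 : (P.1 ∪ P.2) ∩ s = P.1 := by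
      rw [Finset.union_inter_distrib_right, Finset.inter_eq_left.mpr h1, e2,
        Finset.union_empty]
    have q2 : (P.1 ∪ P.2) ∩ t = P.2 := by
      rw [Finset.union_inter_distrib_right, Finset.inter_eq_left.mpr h2, e1,
        Finset.empty_union]
    exact Prod.ext q1 q2
  · intro S hS
    rfl

theorem stmt2 [Fintype V] (G : SimpleGraph V) (σ : Sym2 V → Bool) (p : Sym2 V → ℝ)
    (hp0 : ∀ e, 0 ≤ p e) (hp1 : ∀ e, p e ≤ 1)
    (u v : V) (huv : G.Adj u v) (hbridge : G.IsBridge s(u, v))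
    (A : Set V) (hu : u ∈ A) (hv : v ∉ A)
    (hsep : ∀ x y, G.Adj x y →
      s(x, y) = s(u, v) ∨ (x ∈ A ∧ y ∈ A) ∨ (x ∉ A ∧ y ∉ A)) :
    Rbal G σ p = Rbal (restrictTo G A) σ p * Rbal (restrictTo G Aᶜ) σ p := by
  classical
  set E₁ := edgeFS (restrictTo G A) with hE₁def
  set E₂ := edgeFS (restrictTo G Aᶜ) with hE₂def
  set b : Sym2 V := s(u, v) with hbdef
  have hb1 : b ∉ E₁ := fun h =>
    hv ((edgeFS_restrict_mem h).2 v (Sym2.mem_mk_right u v))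
  have hb2 : b ∉ E₂ := fun h =>
    (edgeFS_restrict_mem h).2 u (Sym2.mem_mk_left u v) hu
  have hd12 : Disjoint E₁ E₂ := by
    rw [Finset.disjoint_left]
    intro e he1 he2
    induction e using Sym2.ind with
    | _ x y =>
      exact ((edgeFS_restrict_mem he2).2 x (Sym2.mem_mk_left x y))
        ((edgeFS_restrict_mem he1).2 x (Sym2.mem_mk_left x y))
  have hd1 : Disjoint E₁ (E₂ ∪ {b}) := by
    rw [Finset.disjoint_union_right]
    exact ⟨hd12, Finset.disjoint_singleton_right.mpr hb1⟩
  have hd2 : Disjoint E₂ ({b} : Finset (Sym2 V)) := Finset.disjoint_singleton_right.mpr hb2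
  have hE : edgeFS G = E₁ ∪ (E₂ ∪ {b}) := edgeFS_decomp huv hsep
  -- key pointwise identity
  have key : ∀ S ∈ (E₁ ∪ (E₂ ∪ {b})).powerset,
      Wt p (E₁ ∪ (E₂ ∪ {b})) S * Ind σ S =
        (Wt p E₁ (S ∩ E₁) * Ind σ (S ∩ E₁)) *
          ((Wt p E₂ ((S ∩ (E₂ ∪ {b})) ∩ E₂) * Ind σ ((S ∩ (E₂ ∪ {b})) ∩ E₂)) *
            Wt p {b} ((S ∩ (E₂ ∪ {b})) ∩ {b})) := by
    intro S hS
    rw [Finset.mem_powerset] at hS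
    have hi2 : (S ∩ (E₂ ∪ {b})) ∩ E₂ = S ∩ E₂ := by
      rw [Finset.inter_assoc, Finset.union_inter_cancel_left]
    have hib : (S ∩ (E₂ ∪ {b})) ∩ {b} = S ∩ {b} := by
      rw [Finset.inter_assoc, Finset.union_inter_cancel_right]
    rw [hi2, hib]
    have hSdec : S = (S ∩ E₁) ∪ ((S ∩ E₂) ∪ (S ∩ {b})) := by
      rw [← Finset.inter_union_distrib_left, ← Finset.inter_union_distrib_left]
      exact (Finset.inter_eq_left.mpr hS).symm
    have d1 : Disjoint (S ∩ E₁) ((S ∩ E₂) ∪ (S ∩ {b})) :=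
      hd1.mono Finset.inter_subset_right
        (Finset.union_subset_union Finset.inter_subset_right Finset.inter_subset_right)
    have d2 : Disjoint (S ∩ E₂) (S ∩ {b}) :=
      hd2.mono Finset.inter_subset_right Finset.inter_subset_right
    have D1 : Disjoint (E₁ \ (S ∩ E₁)) ((E₂ \ (S ∩ E₂)) ∪ ({b} \ (S ∩ {b}))) :=
      hd1.mono Finset.sdiff_subset
        (Finset.union_subset_union Finset.sdiff_subset Finset.sdiff_subset)
    have D2 : Disjoint (E₂ \ (S ∩ E₂)) ({b} \ (S ∩ {b})) :=
      hd2.mono Finset.sdiff_subset Finset.sdiff_subset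
    have hprodp : ∏ e ∈ S, p e =
        (∏ e ∈ S ∩ E₁, p e) * ((∏ e ∈ S ∩ E₂, p e) * ∏ e ∈ S ∩ {b}, p e) := by
      conv_lhs => rw [hSdec]
      rw [Finset.prod_union d1, Finset.prod_union d2]
    have hdiff : (E₁ ∪ (E₂ ∪ {b})) \ S =
        (E₁ \ (S ∩ E₁)) ∪ ((E₂ \ (S ∩ E₂)) ∪ ({b} \ (S ∩ {b}))) := by
      ext e
      simp only [Finset.mem_sdiff, Finset.mem_union, Finset.mem_inter]
      tauto
    have hprodq : ∏ e ∈ (E₁ ∪ (E₂ ∪ {b})) \ S, (1 - p e) =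
        (∏ e ∈ E₁ \ (S ∩ E₁), (1 - p e)) *
          ((∏ e ∈ E₂ \ (S ∩ E₂), (1 - p e)) * ∏ e ∈ {b} \ (S ∩ {b}), (1 - p e)) := by
      rw [hdiff, Finset.prod_union D1, Finset.prod_union D2]
    have hInd : Ind σ S = Ind σ (S ∩ E₁) * Ind σ (S ∩ E₂) := by
      have hiff := nonegcycle_split (σ := σ) huv hbridge hu hv
        (S₁ := S ∩ E₁) (S₂ := S ∩ E₂) (c := S ∩ {b})
        Finset.inter_subset_right Finset.inter_subset_right Finset.inter_subset_right
      conv_lhs => rw [hSdec]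
      simp only [Ind]
      by_cases h1 : NoNegCycle (fromEdgeSet (↑(S ∩ E₁) : Set (Sym2 V))) σ <;>
        by_cases h2 : NoNegCycle (fromEdgeSet (↑(S ∩ E₂) : Set (Sym2 V))) σ
      · rw [if_pos (hiff.mpr ⟨h1, h2⟩), if_pos h1, if_pos h2, mul_one]
      · rw [if_neg (fun hU => h2 (hiff.mp hU).2), if_neg h2, mul_zero]
      · rw [if_neg (fun hU => h1 (hiff.mp hU).1), if_neg h1, zero_mul]
      · rw [if_neg (fun hU => h1 (hiff.mp hU).1), if_neg h1, zero_mul]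
    simp only [Wt]
    rw [hprodp, hprodq, hInd]
    ring
  have step1 := sum_powerset_union_disjoint E₁ (E₂ ∪ {b}) hd1
      (fun T => Wt p E₁ T * Ind σ T)
      (fun T => (Wt p E₂ (T ∩ E₂) * Ind σ (T ∩ E₂)) * Wt p {b} (T ∩ {b}))
  have step2 := sum_powerset_union_disjoint E₂ ({b} : Finset (Sym2 V)) hd2
      (fun T => Wt p E₂ T * Ind σ T) (fun T => Wt p {b} T)
  have hone : ∑ T ∈ ({b} : Finset (Sym2 V)).powerset, Wt p {b} T = 1 := by
    rw [show ({b} : Finset (Sym2 V)) = insert b ∅ from rfl,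
      Finset.sum_powerset_insert (Finset.notMem_empty b), Finset.powerset_empty,
      Finset.sum_singleton, Finset.sum_singleton]
    simp [Wt]
  rw [Rbal_eq G σ p, Rbal_eq (restrictTo G A) σ p, Rbal_eq (restrictTo G Aᶜ) σ p,
    ← hE₁def, ← hE₂def, hE, Finset.sum_congr rfl key, step1, step2, hone, mul_one]
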